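/- Let R be a discrete valuation ring with fraction field K, let X be an integral scheme, and let f : X → Spec R be a proper morphism whose generic fiber X_η satisfies that the canonical map K → Γ(X_η, O_{X_η}) is an isomorphism. Then the canonical map R → Γ(X, O_X) is an isomorphism. -/

import Mathlib

open AlgebraicGeometry CategoryTheory Limits

universe u

lemma dvr_away_uniformizer {R K : Type u} [CommRing R] [IsDomain R] [IsDiscreteValuationRing R]
    [Field K] [Algebra R K] [IsFractionRing R K] {ϖ : R} (hϖ : Irreducible ϖ) :
    IsLocalization.Away ϖ K := by
  have hinj : Function.Injective (algebraMap R K) := IsFractionRing.injective R K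
  have hϖ0 : ϖ ≠ 0 := hϖ.ne_zero
  refine ⟨?_, ?_, ?_⟩
  · rintro ⟨y, n, rfl⟩
    simp only
    refine isUnit_iff_ne_zero.mpr ?_
    rw [map_pow]
    exact pow_ne_zero _ (fun h => hϖ0 (hinj (by rw [h, map_zero])))
  · intro z
    obtain ⟨a, b, hb, hz⟩ := IsFractionRing.div_surjective (A := R) z
    have hb0 : b ≠ 0 := nonZeroDivisors.ne_zero hb
    obtain ⟨n, u, hbe⟩ := IsDiscreteValuationRing.eq_unit_mul_pow_irreducible hb0 hϖ
    refine ⟨⟨a * ↑u⁻¹, ⟨ϖ ^ n, n, rfl⟩⟩, ?_⟩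
    have hbne : algebraMap R K b ≠ 0 := fun h => hb0 (hinj (by rw [h, map_zero]))
    have hϖK : algebraMap R K ϖ ≠ 0 := fun h => hϖ0 (hinj (by rw [h, map_zero]))
    have huK : algebraMap R K (u : R) ≠ 0 :=
      fun h => (Units.ne_zero u) (hinj (by rw [h, map_zero]))
    have hu : (algebraMap R K) ((u⁻¹ : Rˣ) : R) = ((algebraMap R K) (u : R))⁻¹ := by
      refine eq_inv_of_mul_eq_one_left ?_
      rw [← map_mul, Units.inv_mul, map_one]
    subst hz
    subst hbe
    rw [map_mul (algebraMap R K) a, hu, map_mul, map_pow]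
    field_simp
  · intro a b h
    exact ⟨1, by rw [hinj h]⟩

/-- Let `R` be a discrete valuation ring with fraction field `K`, `X` an integral scheme and
`f : X ⟶ Spec R` a proper morphism such that the canonical map `K → Γ(X_η, O)` from `K` to
the global sections of the generic fiber `X_η = X ×_{Spec R} Spec K` is an isomorphism.
Then the canonical map `R → Γ(X, O_X)` is an isomorphism. -/
theorem globalSections_eq_R_of_proper
    {R K : Type u} [CommRing R] [IsDomain R] [IsDiscreteValuationRing R]
    [Field K] [Algebra R K] [IsFractionRing R K]
    (X : Scheme.{u}) [IsIntegral X] (f : X ⟶ Spec (CommRingCat.of R)) [IsProper f]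
    (hη : IsIso ((Scheme.ΓSpecIso (CommRingCat.of K)).inv ≫
      (pullback.snd f (Spec.map (CommRingCat.ofHom (algebraMap R K)))).appTop)) :
    IsIso ((Scheme.ΓSpecIso (CommRingCat.of R)).inv ≫ f.appTop) := by
  set φ : CommRingCat.of R ⟶ CommRingCat.of K := CommRingCat.ofHom (algebraMap R K) with hφ
  obtain ⟨ϖ, hϖ⟩ := IsDiscreteValuationRing.exists_irreducible R
  haveI : IsLocalization.Away ϖ K := dvr_away_uniformizer hϖ
  haveI : IsOpenImmersion (Spec.map φ) := IsOpenImmersion.of_isLocalization ϖ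
  set ι : pullback f (Spec.map φ) ⟶ X := pullback.fst f (Spec.map φ) with hι
  set p2 := pullback.snd f (Spec.map φ) with hp2
  haveI : IsOpenImmersion ι := by rw [hι]; infer_instance
  set e : CommRingCat.of K ⟶ Γ(pullback f (Spec.map φ), ⊤) :=
    (Scheme.ΓSpecIso (CommRingCat.of K)).inv ≫ p2.appTop with he
  haveI : IsIso e := hη
  set g := (Scheme.ΓSpecIso (CommRingCat.of R)).inv ≫ f.appTop with hg
  set j := ι.appTop with hj
  -- the commutative square
  have h1 : f.appTop ≫ ι.appTop = (Spec.map φ).appTop ≫ p2.appTop := by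
    rw [← Scheme.Hom.comp_appTop, ← Scheme.Hom.comp_appTop, pullback.condition]
  have hsq : g ≫ j = φ ≫ e := by
    rw [hg, he, ← Category.assoc φ, Scheme.ΓSpecIso_inv_naturality]
    simp only [Category.assoc]
    rw [hj, ← h1]
  have happ : ∀ z : R, j (g z) = e (algebraMap R K z) := by
    intro z
    have := ConcreteCategory.congr_hom hsq z
    exact this
  -- the generic fiber is nonempty
  haveI hne : Nonempty ↑(pullback f (Spec.map φ)) := by
    by_contra h
    rw [not_nonempty_iff] at h
    have h2 : (⊤ : (pullback f (Spec.map φ)).Opens) = ⊥ := by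
      ext z
      exact (h.false z).elim
    haveI : Subsingleton Γ(pullback f (Spec.map φ), ⊤) := by
      rw [h2]; infer_instance
    have h3 : (1 : K) = 0 :=
      (asIso e).commRingCatIsoToRingEquiv.injective (Subsingleton.elim _ _)
    exact one_ne_zero h3
  obtain ⟨ζ⟩ := hne
  -- j is injective
  have hjinj : Function.Injective j := by
    intro a b hab
    have hstalk : Function.Injective (ι.stalkMap ζ) :=
      ((ConcreteCategory.isIso_iff_bijective _).mp inferInstance).injective
    apply germ_injective_of_isIntegral X (ι.base ζ) (trivial : ι.base ζ ∈ ⊤)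
    apply hstalk
    erw [Scheme.Hom.germ_stalkMap_apply, Scheme.Hom.germ_stalkMap_apply]
    exact congrArg _ hab
  haveI hLR : IsLocalRing ↑(CommRingCat.of R) := inferInstanceAs (IsLocalRing R)
  -- a point of X above the closed point of Spec R
  have hclosed : IsClosed (Set.range f.base) := f.isClosedMap.isClosed_range
  obtain ⟨x0⟩ : Nonempty ↑X := ‹AlgebraicGeometry.IsIntegral X›.nonempty
  have hmem : (IsLocalRing.closedPoint ↑(CommRingCat.of R) : PrimeSpectrum R)
      ∈ Set.range f.base := by
    have h5 : (IsLocalRing.closedPoint ↑(CommRingCat.of R) : PrimeSpectrum R)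
        ∈ closure {f.base x0} := by
      apply (PrimeSpectrum.le_iff_mem_closure (f.base x0) _).mp
      show (f.base x0).asIdeal ≤ (IsLocalRing.closedPoint ↑(CommRingCat.of R)).asIdeal
      exact IsLocalRing.le_maximalIdeal (f.base x0).isPrime.ne_top
    exact closure_minimal (Set.singleton_subset_iff.mpr (Set.mem_range_self _)) hclosed h5
  obtain ⟨x, hx⟩ := hmem
  -- germs of nonunits of R at x are nonunits
  have key : ∀ r : R, ¬ IsUnit r → ¬ IsUnit (X.presheaf.germ ⊤ x trivial (g r)) := by
    intro r hr hu
    have h1 : X.presheaf.germ ⊤ x trivial (g r)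
        = f.stalkMap x ((Spec (CommRingCat.of R)).presheaf.germ ⊤ (f.base x) trivial
            ((Scheme.ΓSpecIso (CommRingCat.of R)).inv r)) := by
      erw [Scheme.Hom.germ_stalkMap_apply]
      rfl
    rw [h1] at hu
    have hu2 : IsUnit ((Spec (CommRingCat.of R)).presheaf.germ ⊤ (f.base x) trivial
        ((Scheme.ΓSpecIso (CommRingCat.of R)).inv r)) :=
      (isUnit_map_iff (f.stalkMap x).hom _).mp hu
    rw [hx] at hu2
    have h2 : (Spec (CommRingCat.of R)).presheaf.germ ⊤ (IsLocalRing.closedPoint ↑(CommRingCat.of R)) trivial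
          ((Scheme.ΓSpecIso (CommRingCat.of R)).inv r)
        = (stalkClosedPointIso (CommRingCat.of R)).inv r := by
      rw [← ΓSpecIso_hom_stalkClosedPointIso_inv]
      show (stalkClosedPointIso (CommRingCat.of R)).inv
        ((Scheme.ΓSpecIso (CommRingCat.of R)).hom ((Scheme.ΓSpecIso (CommRingCat.of R)).inv r))
        = (stalkClosedPointIso (CommRingCat.of R)).inv r
      congr 1
      exact ConcreteCategory.congr_hom (Scheme.ΓSpecIso (CommRingCat.of R)).inv_hom_id r
    rw [h2] at hu2
    have h3 := hu2.map (ConcreteCategory.hom (stalkClosedPointIso (CommRingCat.of R)).hom)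
    have h4 : (stalkClosedPointIso (CommRingCat.of R)).hom
        ((stalkClosedPointIso (CommRingCat.of R)).inv r) = r :=
      by simp
    rw [h4] at h3
    exact hr h3
  -- injectivity of g
  have heinj : Function.Injective e := ((ConcreteCategory.isIso_iff_bijective e).mp this).injective
  have hginj : Function.Injective g := by
    intro a b hab
    apply IsFractionRing.injective R K
    apply heinj
    rw [← happ a, ← happ b, hab]
  -- surjectivity of g
  have hgsurj : Function.Surjective g := by
    intro a
    set eqv := (asIso e).commRingCatIsoToRingEquiv with heqv
    set k : K := eqv.symm (j a) with hk
    have hek : e k = j a := eqv.apply_symm_apply (j a)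
    have main : ∀ r : R, algebraMap R K r = k → ∃ b, g b = a := by
      intro r hr
      refine ⟨r, hjinj ?_⟩
      rw [happ r, hr, hek]
    rcases ValuationRing.isInteger_or_isInteger R k with ⟨r, hr⟩ | ⟨r, hr⟩
    · exact main r hr
    · by_cases hk0 : k = 0
      · exact main 0 (by rw [map_zero, hk0])
      by_cases hru : IsUnit r
      · obtain ⟨u, rfl⟩ := hru
        have h5 : algebraMap R K ↑u * k = 1 := by rw [hr, inv_mul_cancel₀ hk0]
        refine main ((u⁻¹ : Rˣ) : R) ?_
        calc algebraMap R K ((u⁻¹ : Rˣ) : R)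
            = algebraMap R K ((u⁻¹ : Rˣ) : R) * (algebraMap R K ↑u * k) := by
              rw [h5, mul_one]
          _ = algebraMap R K (((u⁻¹ : Rˣ) : R) * ↑u) * k := by rw [map_mul, mul_assoc]
          _ = k := by rw [Units.inv_mul, map_one, one_mul]
      · exfalso
        have h2 : j (g r * a) = j 1 := by
          rw [map_mul, map_one, happ r]
          rw [← hek, ← map_mul, hr, inv_mul_cancel₀ hk0, map_one]
        have h3 : g r * a = 1 := hjinj h2
        have h4 : IsUnit (X.presheaf.germ ⊤ x trivial (g r)) := by
          refine IsUnit.of_mul_eq_one (X.presheaf.germ ⊤ x trivial a) ?_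
          rw [← map_mul, h3, map_one]
        exact key r hru h4
  exact (ConcreteCategory.isIso_iff_bijective g).mpr ⟨hginj, hgsurj⟩
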